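/- Let d ≥ 1, q ∈ ℤ^d with coprime coordinates, and i ∈ ℤ^d with i ∉ ℤq. Then the sequence ℓ ↦ gcd(ℓq + i) (componentwise gcd of the vector ℓq + i) is periodic in ℓ with period G = gcd(i_j q_k − i_k q_j : j,k ∈ {1,…,d}). -/
import Mathlib

/-- The gcd of the vector `ℓ q + i` divides every 2×2 minor `i_j q_k - i_k q_j`,
hence divides their gcd `G`. -/
lemma gcd_vec_dvd_G {d : ℕ} (q i : Fin d → ℤ) (ℓ : ℤ) :
    Finset.univ.gcd (fun j => ℓ * q j + i j) ∣
      Finset.univ.gcd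
        (fun jk : Fin d × Fin d => i jk.1 * q jk.2 - i jk.2 * q jk.1) := by
  apply Finset.dvd_gcd
  intro jk _
  have h1 : Finset.univ.gcd (fun j => ℓ * q j + i j) ∣ ℓ * q jk.1 + i jk.1 :=
    Finset.gcd_dvd (Finset.mem_univ _)
  have h2 : Finset.univ.gcd (fun j => ℓ * q j + i j) ∣ ℓ * q jk.2 + i jk.2 :=
    Finset.gcd_dvd (Finset.mem_univ _)
  have key : i jk.1 * q jk.2 - i jk.2 * q jk.1 =
      (ℓ * q jk.1 + i jk.1) * q jk.2 - (ℓ * q jk.2 + i jk.2) * q jk.1 := by ring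
  rw [key]
  exact dvd_sub (h1.mul_right _) (h2.mul_right _)

theorem stmt_1 {d : ℕ} (hd : 1 ≤ d) (q i : Fin d → ℤ)
    (hq : Finset.univ.gcd q = 1)
    (hi : ¬ ∃ c : ℤ, ∀ j, i j = c * q j) :
    ∀ ℓ : ℤ,
      Finset.univ.gcd
          (fun j =>
            (ℓ + Finset.univ.gcd
                (fun jk : Fin d × Fin d => i jk.1 * q jk.2 - i jk.2 * q jk.1)) * q j + i j) =
        Finset.univ.gcd (fun j => ℓ * q j + i j) := by
  intro ℓ
  set G := Finset.univ.gcd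
      (fun jk : Fin d × Fin d => i jk.1 * q jk.2 - i jk.2 * q jk.1) with hG
  apply Int.dvd_antisymm (Int.nonneg_of_normalize_eq_self Finset.normalize_gcd)
    (Int.nonneg_of_normalize_eq_self Finset.normalize_gcd)
  · -- gcd at ℓ+G divides gcd at ℓ
    apply Finset.dvd_gcd
    intro j _
    have h1 : Finset.univ.gcd (fun j => (ℓ + G) * q j + i j) ∣ (ℓ + G) * q j + i j :=
      Finset.gcd_dvd (Finset.mem_univ _)
    have h2 : Finset.univ.gcd (fun j => (ℓ + G) * q j + i j) ∣ G := by
      have := gcd_vec_dvd_G q i (ℓ + G)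
      rwa [← hG] at this
    have key : ℓ * q j + i j = ((ℓ + G) * q j + i j) - G * q j := by ring
    rw [key]
    exact dvd_sub h1 (h2.mul_right _)
  · -- gcd at ℓ divides gcd at ℓ+G
    apply Finset.dvd_gcd
    intro j _
    have h1 : Finset.univ.gcd (fun j => ℓ * q j + i j) ∣ ℓ * q j + i j :=
      Finset.gcd_dvd (Finset.mem_univ _)
    have h2 : Finset.univ.gcd (fun j => ℓ * q j + i j) ∣ G := by
      have := gcd_vec_dvd_G q i ℓ
      rwa [← hG] at this
    have key : (ℓ + G) * q j + i j = (ℓ * q j + i j) + G * q j := by ring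
    rw [key]
    exact dvd_add h1 (h2.mul_right _)
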